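/- Let U, V, M be given real matrices with U^T U = I and V^T V = I. Then Z* = U M V^T is the unique minimizer of ‖Z‖_* subject to U^T Z V = M; that is, any feasible Z with ‖Z‖_* = ‖M‖_* must equal U M V^T. -/

import Mathlib

open Matrix

/-- The nuclear norm of a real matrix: the sum of its singular values,
i.e. the sum of the square roots of the eigenvalues of `Mᵀ * M`. -/
noncomputable def nuclearNorm {m n : Type*} [Fintype m] [Fintype n] [DecidableEq n]
    (M : Matrix m n ℝ) : ℝ :=
  ∑ i, Real.sqrt ((show (Mᵀ * M).IsHermitian by
    simpa [Matrix.conjTranspose_eq_transpose_of_trivial] using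
      Matrix.isHermitian_conjTranspose_mul_self M).eigenvalues i)

lemma dot_self_nonneg {κ : Type*} [Fintype κ] (v : κ → ℝ) : 0 ≤ v ⬝ᵥ v :=
  Finset.sum_nonneg fun i _ => mul_self_nonneg _

lemma dot_sum_smul_right {κ ι : Type*} [Fintype κ] [Fintype ι] (u : κ → ℝ) (c : ι → ℝ)
    (v : ι → κ → ℝ) : u ⬝ᵥ (∑ i, c i • v i) = ∑ i, c i * (u ⬝ᵥ v i) := by
  simp only [dotProduct, Finset.sum_apply, Pi.smul_apply, smul_eq_mul, Finset.mul_sum]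
  rw [Finset.sum_comm]
  congr 1; ext i; congr 1; ext x; ring

lemma sum_smul_dot {κ ι : Type*} [Fintype κ] [Fintype ι] (a : ι → κ → ℝ) (c : ι → ℝ)
    (hao : ∀ i j, i ≠ j → a i ⬝ᵥ a j = 0) :
    (∑ i, c i • a i) ⬝ᵥ (∑ i, c i • a i) = ∑ i, (c i)^2 * (a i ⬝ᵥ a i) := by
  rw [dot_sum_smul_right]
  congr 1; ext i
  have : (∑ j, c j • a j) ⬝ᵥ a i = ∑ j, c j * (a j ⬝ᵥ a i) := by
    rw [dotProduct_comm, dot_sum_smul_right]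
    congr 1; ext j; rw [dotProduct_comm]
  rw [this, Finset.sum_eq_single i]
  · ring
  · intro j _ hj; rw [hao j i hj]; ring
  · intro h; exact absurd (Finset.mem_univ i) h

lemma bessel {κ ι : Type*} [Fintype κ] [Fintype ι] (b : ι → κ → ℝ) (yv : κ → ℝ)
    (hbo : ∀ i j, i ≠ j → b i ⬝ᵥ b j = 0) (hbn : ∀ i, b i ⬝ᵥ b i ≤ 1)
    (hy : yv ⬝ᵥ yv = 1) : ∑ i, (yv ⬝ᵥ b i)^2 ≤ 1 := by
  set c := fun i => yv ⬝ᵥ b i with hc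
  have h0 : 0 ≤ (yv - ∑ i, c i • b i) ⬝ᵥ (yv - ∑ i, c i • b i) := dot_self_nonneg _
  rw [sub_dotProduct, dotProduct_sub, dotProduct_sub] at h0
  rw [sum_smul_dot b c hbo] at h0
  rw [dot_sum_smul_right] at h0
  have hcomm : (∑ i, c i • b i) ⬝ᵥ yv = ∑ i, c i * (yv ⬝ᵥ b i) := by
    rw [dotProduct_comm, dot_sum_smul_right]
  rw [hcomm, hy] at h0
  have hle : ∑ i, (c i)^2 * (b i ⬝ᵥ b i) ≤ ∑ i, (c i)^2 := by
    apply Finset.sum_le_sum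
    intro i _
    nlinarith [hbn i, sq_nonneg (c i), dot_self_nonneg (b i)]
  have : ∑ i, c i * (yv ⬝ᵥ b i) = ∑ i, (c i)^2 := by
    congr 1; ext i; rw [hc]; ring
  rw [this] at h0
  linarith

lemma mulVec_sum' {k l ι : Type*} [Fintype k] [Fintype l] [Fintype ι] (A : Matrix k l ℝ)
    (f : ι → l → ℝ) : A *ᵥ (∑ i, f i) = ∑ i, A *ᵥ f i := by
  funext p
  simp only [mulVec, dotProduct, Finset.sum_apply, Finset.mul_sum]
  rw [Finset.sum_comm]


lemma dot_sub_smul {κ : Type*} [Fintype κ] (s : ℝ) (u v : κ → ℝ) :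
    (u - s • v) ⬝ᵥ (u - s • v) = u ⬝ᵥ u - 2*s*(v ⬝ᵥ u) + s^2 * (v ⬝ᵥ v) := by
  simp only [sub_dotProduct, dotProduct_sub, smul_dotProduct, dotProduct_smul, smul_eq_mul]
  rw [dotProduct_comm u v]
  ring

lemma bessel_tight {κ ι : Type*} [Fintype κ] [Fintype ι] (b : ι → κ → ℝ) (yv : κ → ℝ)
    (hbo : ∀ i j, i ≠ j → b i ⬝ᵥ b j = 0) (hbn : ∀ i, b i ⬝ᵥ b i ≤ 1)
    (hy : yv ⬝ᵥ yv = 1) (hge : 1 ≤ ∑ i, (yv ⬝ᵥ b i)^2) :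
    yv = ∑ i, (yv ⬝ᵥ b i) • b i := by
  set c := fun i => yv ⬝ᵥ b i with hc
  have h0 : 0 ≤ (yv - ∑ i, c i • b i) ⬝ᵥ (yv - ∑ i, c i • b i) := dot_self_nonneg _
  have hexp : (yv - ∑ i, c i • b i) ⬝ᵥ (yv - ∑ i, c i • b i)
      = 1 - 2 * (∑ i, (c i)^2) + ∑ i, (c i)^2 * (b i ⬝ᵥ b i) := by
    rw [sub_dotProduct, dotProduct_sub, dotProduct_sub, hy, sum_smul_dot b c hbo,
      dot_sum_smul_right]
    have hcomm : (∑ i, c i • b i) ⬝ᵥ yv = ∑ i, c i * (yv ⬝ᵥ b i) := by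
      rw [dotProduct_comm, dot_sum_smul_right]
    rw [hcomm]
    have : ∑ i, c i * (yv ⬝ᵥ b i) = ∑ i, (c i)^2 := by
      congr 1; ext i; rw [hc]; ring
    rw [this]; ring
  have hT : ∑ i, (c i)^2 * (b i ⬝ᵥ b i) ≤ ∑ i, (c i)^2 := by
    apply Finset.sum_le_sum
    intro i _
    nlinarith [hbn i, sq_nonneg (c i), dot_self_nonneg (b i)]
  have hzero : (yv - ∑ i, c i • b i) ⬝ᵥ (yv - ∑ i, c i • b i) = 0 := by
    rw [hexp]; nlinarith
  have := dotProduct_self_eq_zero.mp hzero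
  rw [sub_eq_zero] at this
  exact this

lemma vecMulVec_zero_left {k l : Type*} [Fintype k] [Fintype l] (y : l → ℝ) :
    vecMulVec (0 : k → ℝ) y = 0 := by
  ext p q; simp [vecMulVec_apply]

lemma mul_vecMulVec' {k l : Type*} [Fintype k] [Fintype l] (P : Matrix k k ℝ)
    (w : k → ℝ) (y : l → ℝ) : P * vecMulVec w y = vecMulVec (P *ᵥ w) y := by
  ext p q
  simp only [mul_apply, vecMulVec_apply, mulVec, dotProduct, Finset.sum_mul]
  congr 1; ext r; ring

lemma vecMulVec_mul' {k l : Type*} [Fintype k] [Fintype l] (Q : Matrix l l ℝ)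
    (w : k → ℝ) (y : l → ℝ) : vecMulVec w y * Q = vecMulVec w (Qᵀ *ᵥ y) := by
  ext p q
  simp only [mul_apply, vecMulVec_apply, mulVec, dotProduct, transpose_apply, Finset.mul_sum]
  congr 1; ext r; ring

lemma euclid_inner_dot {l : Type*} [Fintype l] (x z : EuclideanSpace ℝ l) :
    (inner ℝ x z : ℝ) = (x : l → ℝ) ⬝ᵥ (z : l → ℝ) := by
  simp [PiLp.inner_apply, dotProduct, mul_comm]

lemma spectral_package {k l : Type*} [Fintype k] [Fintype l] [DecidableEq l]
    (A : Matrix k l ℝ) :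
    ∃ y : l → (l → ℝ),
      (∀ i j, y i ⬝ᵥ y j = if i = j then 1 else 0) ∧
      (∀ w : l → ℝ, ∑ j, (y j ⬝ᵥ w) • y j = w) ∧
      (∀ i j, (A *ᵥ y i) ⬝ᵥ (A *ᵥ y j) =
        if i = j then (Matrix.isHermitian_conjTranspose_mul_self A).eigenvalues i else 0) ∧
      (∀ j, (Aᴴ * A) *ᵥ y j =
        (Matrix.isHermitian_conjTranspose_mul_self A).eigenvalues j • y j) := by
  have hA : (Aᴴ * A).IsHermitian := Matrix.isHermitian_conjTranspose_mul_self A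
  have horth : ∀ i j, ((hA.eigenvectorBasis i : l → ℝ)) ⬝ᵥ ((hA.eigenvectorBasis j : l → ℝ)) = if i = j then 1 else 0 := by
    intro i j
    have h := hA.eigenvectorBasis.orthonormal
    rw [orthonormal_iff_ite] at h
    have := h i j
    rw [euclid_inner_dot] at this
    simpa using this
  refine ⟨fun j => (hA.eigenvectorBasis j : l → ℝ), horth, ?_, ?_, fun j => hA.mulVec_eigenvectorBasis j⟩
  · intro w
    have h2 := congrArg WithLp.ofLp (hA.eigenvectorBasis.sum_repr' (WithLp.toLp 2 w))
    simp only [euclid_inner_dot, WithLp.ofLp_sum, WithLp.ofLp_smul, WithLp.ofLp_toLp] at h2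
    exact h2
  · intro i j
    have hAT : Aᵀ * A = Aᴴ * A := by rw [conjTranspose_eq_transpose_of_trivial]
    have hm : (Aᴴ * A) *ᵥ (hA.eigenvectorBasis j : l → ℝ)
        = hA.eigenvalues j • (hA.eigenvectorBasis j : l → ℝ) := hA.mulVec_eigenvectorBasis j
    have key : (A *ᵥ (hA.eigenvectorBasis i : l → ℝ)) ⬝ᵥ (A *ᵥ (hA.eigenvectorBasis j : l → ℝ))
        = (hA.eigenvectorBasis i : l → ℝ) ⬝ᵥ ((Aᴴ * A) *ᵥ (hA.eigenvectorBasis j : l → ℝ)) := by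
      rw [dotProduct_mulVec (hA.eigenvectorBasis i : l → ℝ), dotProduct_mulVec, vecMul_mulVec, hAT]
    rw [key, hm, dotProduct_smul, smul_eq_mul, horth i j]
    by_cases h : i = j <;> simp [h]

lemma dotC {α β : Type*} [Fintype α] [Fintype β] (C : Matrix α β ℝ) (x y : β → ℝ) :
    (C *ᵥ x) ⬝ᵥ (C *ᵥ y) = x ⬝ᵥ ((Cᵀ * C) *ᵥ y) := by
  rw [dotProduct_mulVec (C *ᵥ x), vecMul_mulVec, ← dotProduct_mulVec]

lemma sandwich {k l m n : Type*} [Fintype k] [Fintype l] [Fintype m] [Fintype n]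
    (U : Matrix k m ℝ) (Z : Matrix k l ℝ) (V : Matrix l n ℝ) (x : m → ℝ) (w : n → ℝ) :
    (U *ᵥ x) ⬝ᵥ (Z *ᵥ (V *ᵥ w)) = x ⬝ᵥ ((Uᵀ * Z * V) *ᵥ w) := by
  rw [mulVec_mulVec, dotProduct_mulVec (U *ᵥ x), vecMul_mulVec, ← dotProduct_mulVec,
    ← Matrix.mul_assoc]

lemma master {k l ι : Type*} [Fintype k] [Fintype l] [Fintype ι] [DecidableEq l]
    (A : Matrix k l ℝ) (a : ι → k → ℝ) (b : ι → l → ℝ)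
    (hao : ∀ i j, i ≠ j → a i ⬝ᵥ a j = 0) (han : ∀ i, a i ⬝ᵥ a i ≤ 1)
    (hbo : ∀ i j, i ≠ j → b i ⬝ᵥ b j = 0) (hbn : ∀ i, b i ⬝ᵥ b i ≤ 1) :
    (∑ i, a i ⬝ᵥ (A *ᵥ b i)) ≤ nuclearNorm A ∧
    ((∑ i, a i ⬝ᵥ (A *ᵥ b i)) = nuclearNorm A →
      ∀ (P : Matrix k k ℝ) (Q : Matrix l l ℝ), Qᵀ = Q →
      (∀ i, P *ᵥ a i = a i) → (∀ i, Q *ᵥ b i = b i) → P * A * Q = A) := by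
  obtain ⟨y, hy1, hy2, hy3, -⟩ := spectral_package A
  set lam := (Matrix.isHermitian_conjTranspose_mul_self A).eigenvalues with hlamdef
  have hlam : ∀ j, 0 ≤ lam j := fun j =>
    Matrix.eigenvalues_conjTranspose_mul_self_nonneg A j
  set t := fun j => Real.sqrt (lam j) with htdef
  have ht0 : ∀ j, 0 ≤ t j := fun j => Real.sqrt_nonneg _
  have ht2 : ∀ j, t j * t j = lam j := fun j => Real.mul_self_sqrt (hlam j)
  set w := fun j => A *ᵥ y j with hwdef
  have hww : ∀ i j, w i ⬝ᵥ w j = if i = j then lam i else 0 := hy3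
  set c := fun i j => y j ⬝ᵥ b i with hcdef
  set d := fun j => ∑ i, c i j • a i with hddef
  have hnn : nuclearNorm A = ∑ j, t j := rfl
  -- Step 1
  have step1 : (∑ i, a i ⬝ᵥ (A *ᵥ b i)) = ∑ j, d j ⬝ᵥ w j := by
    have hbi : ∀ i, A *ᵥ b i = ∑ j, c i j • w j := by
      intro i
      conv_lhs => rw [← hy2 (b i)]
      rw [mulVec_sum']
      congr 1; ext j
      rw [mulVec_smul]
    calc (∑ i, a i ⬝ᵥ (A *ᵥ b i)) = ∑ i, ∑ j, c i j * (a i ⬝ᵥ w j) := by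
          congr 1; ext i; rw [hbi i, dot_sum_smul_right]
      _ = ∑ j, ∑ i, c i j * (a i ⬝ᵥ w j) := Finset.sum_comm
      _ = ∑ j, d j ⬝ᵥ w j := by
          congr 1; ext j
          rw [dotProduct_comm, dot_sum_smul_right]
          congr 1; ext i; rw [dotProduct_comm]
  -- Bessel
  have hysq : ∀ j, y j ⬝ᵥ y j = 1 := by intro j; simpa using hy1 j j
  have hbes : ∀ j, ∑ i, (c i j)^2 ≤ 1 := fun j => bessel b (y j) hbo hbn (hysq j)
  have hdd0 : ∀ j, d j ⬝ᵥ d j = ∑ i, (c i j)^2 * (a i ⬝ᵥ a i) := fun j =>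
    sum_smul_dot a (fun i => c i j) hao
  have hdd : ∀ j, d j ⬝ᵥ d j ≤ 1 := by
    intro j
    rw [hdd0 j]
    calc ∑ i, (c i j)^2 * (a i ⬝ᵥ a i) ≤ ∑ i, (c i j)^2 :=
          Finset.sum_le_sum (fun i _ => by
            nlinarith [han i, sq_nonneg (c i j), dot_self_nonneg (a i)])
      _ ≤ 1 := hbes j
  have hwj : ∀ j, w j ⬝ᵥ w j = lam j := by intro j; simpa using hww j j
  have hbound : ∀ j, d j ⬝ᵥ w j ≤ t j := by
    intro j
    have h0 : 0 ≤ (w j - t j • d j) ⬝ᵥ (w j - t j • d j) := dot_self_nonneg _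
    rw [dot_sub_smul, hwj j] at h0
    rcases eq_or_lt_of_le (ht0 j) with h|h
    · have hl0 : lam j = 0 := by rw [← ht2 j, ← h]; ring
      have hw0 : w j = 0 := dotProduct_self_eq_zero.mp (by rw [hwj j, hl0])
      rw [hw0, dotProduct_zero, ← h]
    · nlinarith [hdd j, ht2 j, sq_nonneg (t j), dot_self_nonneg (d j)]
  constructor
  · rw [step1, hnn]; exact Finset.sum_le_sum (fun j _ => hbound j)
  · intro heq P Q hQsym hPa hQb
    have hterm : ∀ j, d j ⬝ᵥ w j = t j := by
      have hsum : ∑ j, d j ⬝ᵥ w j = ∑ j, t j := by rw [← step1, heq, hnn]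
      intro j
      exact (Finset.sum_eq_sum_iff_of_le (fun j _ => hbound j)).mp hsum j
        (Finset.mem_univ j)
    have hkey : ∀ j, (P *ᵥ w j = w j) ∧ (w j ≠ 0 → Q *ᵥ y j = y j) := by
      intro j
      by_cases h0 : t j = 0
      · have hl0 : lam j = 0 := by rw [← ht2 j, h0]; ring
        have hw0 : w j = 0 := dotProduct_self_eq_zero.mp (by rw [hwj j, hl0])
        exact ⟨by rw [hw0, mulVec_zero], fun h => absurd hw0 h⟩
      · have htpos : 0 < t j := lt_of_le_of_ne (ht0 j) (Ne.symm h0)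
        have hdw := hterm j
        have hee : (w j - t j • d j) ⬝ᵥ (w j - t j • d j)
            = (t j)^2 * (d j ⬝ᵥ d j - 1) := by
          rw [dot_sub_smul, hwj j, hdw, ← ht2 j]; ring
        have h1 : (w j - t j • d j) ⬝ᵥ (w j - t j • d j) ≤ 0 := by
          rw [hee]; nlinarith [hdd j, sq_nonneg (t j)]
        have he0 : w j - t j • d j = 0 :=
          dotProduct_self_eq_zero.mp (le_antisymm h1 (dot_self_nonneg _))
        have hwd : w j = t j • d j := by rwa [sub_eq_zero] at he0
        have hdd1 : d j ⬝ᵥ d j = 1 := by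
          have h2 : (t j)^2 * (d j ⬝ᵥ d j - 1) = 0 := by rw [← hee, he0, zero_dotProduct]
          rcases mul_eq_zero.mp h2 with h3 | h3
          · exact absurd h3 (pow_ne_zero 2 h0)
          · linarith
        have hsc : ∑ i, (c i j)^2 = 1 := by
          have hge : 1 ≤ ∑ i, (c i j)^2 := by
            have h4 : (1:ℝ) ≤ ∑ i, (c i j)^2 * (a i ⬝ᵥ a i) := by rw [← hdd0 j, hdd1]
            calc (1:ℝ) ≤ ∑ i, (c i j)^2 * (a i ⬝ᵥ a i) := h4
              _ ≤ ∑ i, (c i j)^2 := Finset.sum_le_sum (fun i _ => by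
                  nlinarith [han i, sq_nonneg (c i j), dot_self_nonneg (a i)])
          exact le_antisymm (hbes j) hge
        have hr : y j = ∑ i, c i j • b i :=
          bessel_tight b (y j) hbo hbn (hysq j) (le_of_eq hsc.symm)
        have hQy : Q *ᵥ y j = y j := by
          conv_lhs => rw [hr, mulVec_sum']
          conv_rhs => rw [hr]
          congr 1; ext i
          rw [mulVec_smul, hQb i]
        have hPw : P *ᵥ w j = w j := by
          have hPd : P *ᵥ d j = d j := by
            show P *ᵥ (∑ i, c i j • a i) = ∑ i, c i j • a i
            rw [mulVec_sum']
            congr 1; ext i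
            rw [mulVec_smul, hPa i]
          rw [hwd, mulVec_smul, hPd]
        exact ⟨hPw, fun _ => hQy⟩
    have hdecomp : A = ∑ j, vecMulVec (w j) (y j) := by
      ext p q
      have e1 : A p q = (A *ᵥ Pi.single q 1) p := by
        rw [mulVec_single]; simp
      rw [e1, ← hy2 (Pi.single q 1), mulVec_sum', Finset.sum_apply, Matrix.sum_apply]
      congr 1; ext j
      rw [mulVec_smul]
      simp only [Pi.smul_apply, smul_eq_mul, vecMulVec_apply, dotProduct_single, mul_one]
      ring
    conv_rhs => rw [hdecomp]
    conv_lhs => rw [hdecomp]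
    rw [Matrix.mul_sum, Matrix.sum_mul]
    congr 1; ext j
    by_cases hw0 : w j = 0
    · rw [hw0, vecMulVec_zero_left]
      simp
    · rw [mul_vecMulVec', vecMulVec_mul', hQsym, (hkey j).1, (hkey j).2 hw0]


lemma lower {k l m n : Type*} [Fintype k] [Fintype l] [Fintype m] [Fintype n]
    [DecidableEq l] [DecidableEq m] [DecidableEq n]
    (U : Matrix k m ℝ) (V : Matrix l n ℝ) (M : Matrix m n ℝ)
    (hU : Uᵀ * U = 1) (hV : Vᵀ * V = 1) (Z : Matrix k l ℝ) (hZ : Uᵀ * Z * V = M) :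
    nuclearNorm M ≤ nuclearNorm Z ∧
      (nuclearNorm Z = nuclearNorm M → (U * Uᵀ) * Z * (V * Vᵀ) = Z) := by
  obtain ⟨v, hv1, hv2, hv3, -⟩ := spectral_package M
  set lamM := (Matrix.isHermitian_conjTranspose_mul_self M).eigenvalues with hlamdef
  have hlam : ∀ i, 0 ≤ lamM i := fun i =>
    Matrix.eigenvalues_conjTranspose_mul_self_nonneg M i
  set sM := fun i => Real.sqrt (lamM i) with hsdef
  have hs2 : ∀ i, sM i * sM i = lamM i := fun i => Real.mul_self_sqrt (hlam i)
  have hUdot : ∀ x y : m → ℝ, (U *ᵥ x) ⬝ᵥ (U *ᵥ y) = x ⬝ᵥ y := by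
    intro x y; rw [dotC, hU, one_mulVec]
  have hVdot : ∀ x y : n → ℝ, (V *ᵥ x) ⬝ᵥ (V *ᵥ y) = x ⬝ᵥ y := by
    intro x y; rw [dotC, hV, one_mulVec]
  set a := fun i => if lamM i = 0 then (0 : k → ℝ) else (sM i)⁻¹ • (U *ᵥ (M *ᵥ v i)) with hadef
  set b := fun i => V *ᵥ v i with hbdef
  have hsne : ∀ i, lamM i ≠ 0 → sM i ≠ 0 := by
    intro i hi
    rw [hsdef]
    simp only [ne_eq, Real.sqrt_eq_zero (hlam i)]
    exact hi
  have haa : ∀ i j, a i ⬝ᵥ a j = if lamM i = 0 ∨ lamM j = 0 then 0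
      else (if i = j then 1 else 0) := by
    intro i j
    by_cases hi : lamM i = 0
    · simp [hadef, hi]
    by_cases hj : lamM j = 0
    · simp [hadef, hi, hj]
    simp only [hadef, if_neg hi, if_neg hj, hi, hj, or_self, if_false]
    rw [smul_dotProduct, dotProduct_smul, hUdot, hv3 i j]
    by_cases h : i = j
    · subst h
      rw [if_pos rfl, if_pos rfl, smul_eq_mul, smul_eq_mul]
      field_simp [hsne i hi]
      rw [← hs2 i]
      ring
    · rw [if_neg h, if_neg h]
      simp
  have hao : ∀ i j, i ≠ j → a i ⬝ᵥ a j = 0 := by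
    intro i j hij
    rw [haa i j]
    by_cases h : lamM i = 0 ∨ lamM j = 0 <;> simp [h, hij]
  have han : ∀ i, a i ⬝ᵥ a i ≤ 1 := by
    intro i
    rw [haa i i]
    by_cases h : lamM i = 0 <;> simp [h]
  have hbo : ∀ i j, i ≠ j → b i ⬝ᵥ b j = 0 := by
    intro i j hij
    rw [hbdef]; dsimp only
    rw [hVdot, hv1 i j, if_neg hij]
  have hbn : ∀ i, b i ⬝ᵥ b i ≤ 1 := by
    intro i
    rw [hbdef]; dsimp only
    rw [hVdot, hv1 i i, if_pos rfl]
  have hsum : ∑ i, a i ⬝ᵥ (Z *ᵥ b i) = nuclearNorm M := by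
    rw [show nuclearNorm M = ∑ i, sM i from rfl]
    apply Finset.sum_congr rfl
    intro i _
    by_cases hi : lamM i = 0
    · simp [hadef, hi, hsdef]
    · rw [hadef]
      simp only [if_neg hi]
      rw [hbdef]
      dsimp only
      rw [smul_dotProduct, sandwich, hZ, hv3 i i, if_pos rfl, smul_eq_mul]
      field_simp [hsne i hi]
      rw [← hs2 i]
      ring
  obtain ⟨hle, heqc⟩ := master Z a b hao han hbo hbn
  rw [hsum] at hle heqc
  refine ⟨hle, ?_⟩
  intro hZM
  have hQsym : (V * Vᵀ)ᵀ = V * Vᵀ := by rw [transpose_mul, transpose_transpose]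
  have hUU : ∀ x : m → ℝ, (U * Uᵀ) *ᵥ (U *ᵥ x) = U *ᵥ x := by
    intro x
    rw [mulVec_mulVec, Matrix.mul_assoc, hU, Matrix.mul_one]
  have hVV : ∀ x : n → ℝ, (V * Vᵀ) *ᵥ (V *ᵥ x) = V *ᵥ x := by
    intro x
    rw [mulVec_mulVec, Matrix.mul_assoc, hV, Matrix.mul_one]
  have hPa : ∀ i, (U * Uᵀ) *ᵥ a i = a i := by
    intro i
    by_cases hi : lamM i = 0
    · simp [hadef, hi]
    · rw [hadef]
      simp only [if_neg hi]
      rw [mulVec_smul, hUU]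
  have hQb : ∀ i, (V * Vᵀ) *ᵥ b i = b i := fun i => hVV (v i)
  exact heqc hZM.symm (U * Uᵀ) (V * Vᵀ) hQsym hPa hQb

lemma upper {k l m n : Type*} [Fintype k] [Fintype l] [Fintype m] [Fintype n]
    [DecidableEq l] [DecidableEq m] [DecidableEq n]
    (U : Matrix k m ℝ) (V : Matrix l n ℝ) (M : Matrix m n ℝ)
    (hU : Uᵀ * U = 1) (hV : Vᵀ * V = 1) :
    nuclearNorm (U * M * Vᵀ) ≤ nuclearNorm M := by
  set G := U * M * Vᵀ with hGdef
  obtain ⟨y, hy1, hy2, hy3, hy4⟩ := spectral_package G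
  set mu := (Matrix.isHermitian_conjTranspose_mul_self G).eigenvalues with hmudef
  have hmu : ∀ j, 0 ≤ mu j := fun j =>
    Matrix.eigenvalues_conjTranspose_mul_self_nonneg G j
  set t := fun j => Real.sqrt (mu j) with htdef
  have ht2 : ∀ j, t j * t j = mu j := fun j => Real.mul_self_sqrt (hmu j)
  have htne : ∀ j, mu j ≠ 0 → t j ≠ 0 := by
    intro j hj
    rw [htdef]
    simp only [ne_eq, Real.sqrt_eq_zero (hmu j)]
    exact hj
  have hUdot : ∀ x y : m → ℝ, (U *ᵥ x) ⬝ᵥ (U *ᵥ y) = x ⬝ᵥ y := by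
    intro x y; rw [dotC, hU, one_mulVec]
  set z := fun j => Vᵀ *ᵥ y j with hzdef
  have hGz : ∀ j, G *ᵥ y j = U *ᵥ (M *ᵥ z j) := by
    intro j
    rw [hzdef]; dsimp only
    rw [hGdef, ← mulVec_mulVec, ← mulVec_mulVec]
  have hMz : ∀ i j, (M *ᵥ z i) ⬝ᵥ (M *ᵥ z j) = if i = j then mu i else 0 := by
    intro i j
    rw [← hUdot, ← hGz, ← hGz, hy3]
  -- G^T G = V * (M^T M) * V^T absorbs V V^T on the left
  have hGt : Gᴴ = V * (Mᵀ * Uᵀ) := by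
    rw [conjTranspose_eq_transpose_of_trivial, hGdef, transpose_mul, transpose_mul,
      transpose_transpose]
  have hGG : V * Vᵀ * (Gᴴ * G) = Gᴴ * G := by
    rw [hGt]
    have h1 : V * Vᵀ * (V * (Mᵀ * Uᵀ) * G) = V * ((Vᵀ * V) * ((Mᵀ * Uᵀ) * G)) := by
      simp only [Matrix.mul_assoc]
    rw [h1, hV, Matrix.one_mul, ← Matrix.mul_assoc]
  have hVy : ∀ j, mu j ≠ 0 → (V * Vᵀ) *ᵥ y j = y j := by
    intro j hj
    have h2 : mu j • ((V * Vᵀ) *ᵥ y j) = mu j • y j := by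
      rw [← mulVec_smul, ← hy4 j, mulVec_mulVec, hGG, hy4 j]
    exact smul_right_injective (l → ℝ) hj h2
  have hzz : ∀ i j, mu i ≠ 0 → mu j ≠ 0 → z i ⬝ᵥ z j = if i = j then 1 else 0 := by
    intro i j _ hj
    rw [hzdef]; dsimp only
    rw [dotC, transpose_transpose, hVy j hj, hy1]
  set a := fun j => if mu j = 0 then (0 : m → ℝ) else (t j)⁻¹ • (M *ᵥ z j) with hadef
  set b := fun j => if mu j = 0 then (0 : n → ℝ) else z j with hbdef
  have hao : ∀ i j, i ≠ j → a i ⬝ᵥ a j = 0 := by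
    intro i j hij
    by_cases hi : mu i = 0
    · simp [hadef, hi]
    by_cases hj : mu j = 0
    · simp [hadef, hi, hj]
    rw [hadef]
    simp only [if_neg hi, if_neg hj]
    rw [smul_dotProduct, dotProduct_smul, hMz i j, if_neg hij]
    simp
  have han : ∀ i, a i ⬝ᵥ a i ≤ 1 := by
    intro i
    by_cases hi : mu i = 0
    · simp [hadef, hi]
    rw [hadef]
    simp only [if_neg hi]
    rw [smul_dotProduct, dotProduct_smul, hMz i i, if_pos rfl, smul_eq_mul, smul_eq_mul]
    have : (t i)⁻¹ * ((t i)⁻¹ * mu i) = 1 := by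
      field_simp [htne i hi]
      rw [← ht2 i]
      ring
    rw [this]
  have hbo : ∀ i j, i ≠ j → b i ⬝ᵥ b j = 0 := by
    intro i j hij
    by_cases hi : mu i = 0
    · simp [hbdef, hi]
    by_cases hj : mu j = 0
    · simp [hbdef, hi, hj]
    rw [hbdef]
    simp only [if_neg hi, if_neg hj]
    rw [hzz i j hi hj, if_neg hij]
  have hbn : ∀ i, b i ⬝ᵥ b i ≤ 1 := by
    intro i
    by_cases hi : mu i = 0
    · simp [hbdef, hi]
    rw [hbdef]
    simp only [if_neg hi]
    rw [hzz i i hi hi, if_pos rfl]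
  have hsum : ∑ j, a j ⬝ᵥ (M *ᵥ b j) = nuclearNorm G := by
    rw [show nuclearNorm G = ∑ j, t j from rfl]
    apply Finset.sum_congr rfl
    intro j _
    by_cases hj : mu j = 0
    · simp [hadef, hj, htdef]
    · rw [hadef, hbdef]
      simp only [if_neg hj]
      rw [smul_dotProduct, hMz j j, if_pos rfl, smul_eq_mul]
      field_simp [htne j hj]
      rw [← ht2 j]
      ring
  have := (master M a b hao han hbo hbn).1
  rw [hsum] at this
  exact this

theorem stmt_4 {k l m n : Type*} [Fintype k] [Fintype l] [Fintype m] [Fintype n]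
    [DecidableEq l] [DecidableEq m] [DecidableEq n]
    (U : Matrix k m ℝ) (V : Matrix l n ℝ) (M : Matrix m n ℝ)
    (hU : Uᵀ * U = 1) (hV : Vᵀ * V = 1) :
    Uᵀ * (U * M * Vᵀ) * V = M ∧
    (∀ Z : Matrix k l ℝ, Uᵀ * Z * V = M → nuclearNorm (U * M * Vᵀ) ≤ nuclearNorm Z) ∧
    (∀ Z : Matrix k l ℝ, Uᵀ * Z * V = M → nuclearNorm Z = nuclearNorm M → Z = U * M * Vᵀ) := by
  have hfeas : Uᵀ * (U * M * Vᵀ) * V = M := by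
    calc Uᵀ * (U * M * Vᵀ) * V = (Uᵀ * U) * M * (Vᵀ * V) := by
          simp only [Matrix.mul_assoc]
      _ = M := by rw [hU, hV, Matrix.one_mul, Matrix.mul_one]
  refine ⟨hfeas, ?_, ?_⟩
  · intro Z hZ
    calc nuclearNorm (U * M * Vᵀ) ≤ nuclearNorm M := upper U V M hU hV
      _ ≤ nuclearNorm Z := (lower U V M hU hV Z hZ).1
  · intro Z hZ hnorm
    have h1 : (U * Uᵀ) * Z * (V * Vᵀ) = Z := (lower U V M hU hV Z hZ).2 hnorm
    calc Z = (U * Uᵀ) * Z * (V * Vᵀ) := h1.symm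
      _ = U * (Uᵀ * Z * V) * Vᵀ := by simp only [Matrix.mul_assoc]
      _ = U * M * Vᵀ := by rw [hZ]
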